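/- Assume W*V = I_S and that f_s : ℝ × ℂ^S → ℂ^S is continuous. Suppose v : [0,H] → ℂ^N satisfies, for every θ ∈ [0,H], v'(θ) = δ V f_s(T + δθ, W* v(θ)) + Σ_{j=1}^{i} γ_j(θ/H) g_j, where g_j := f(T_j, Y_j) − V f_s(T_j, W* Y_j). Then the component of the endpoint value outside the surrogate subspace is given by a Runge–Kutta update: (I_N − V W*) v(H) = (I_N − V W*) ( v(0) + H Σ_{j=1}^{i} γ̄_j g_j ), where γ̄_j := ∫₀¹ γ_j(τ) dτ. -/

import Mathlib

open Matrix

/-- If `W* V = I_S`, `f_s` is continuous, and `v : [0,H] → ℂ^N` solves the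
full-space modified fast ODE
`v'(θ) = δ V f_s(T + δθ, W* v(θ)) + Σ_j γ_j(θ/H) g_j`, with
`g_j = f(T_j, Y_j) − V f_s(T_j, W* Y_j)`, then the component of `v(H)` outside the
surrogate subspace is a Runge–Kutta update:
`(I − V W*) v(H) = (I − V W*) (v(0) + H Σ_j γ̄_j g_j)` where `γ̄_j = ∫₀¹ γ_j(τ) dτ`. -/
theorem sm_mri_gark_outside_subspace (N S : ℕ) (hN : 0 < N) (hS : 0 < S)
    (V W : Matrix (Fin N) (Fin S) ℂ) (hVW : Wᴴ * V = 1)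
    (f : ℝ → (Fin N → ℂ) → (Fin N → ℂ))
    (fs : ℝ → (Fin S → ℂ) → (Fin S → ℂ))
    (hfs : Continuous fun p : ℝ × (Fin S → ℂ) => fs p.1 p.2)
    (H : ℝ) (hH : 0 < H) (δ T : ℝ) (i : ℕ)
    (Tj : Fin i → ℝ) (Y : Fin i → (Fin N → ℂ)) (γ : Fin i → Polynomial ℝ)
    (g : Fin i → (Fin N → ℂ))
    (hg : ∀ j, g j = f (Tj j) (Y j) - V.mulVec (fs (Tj j) (Wᴴ.mulVec (Y j))))
    (v : ℝ → (Fin N → ℂ))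
    (hv : ∀ θ ∈ Set.Icc (0:ℝ) H,
      HasDerivAt v
        (δ • V.mulVec (fs (T + δ * θ) (Wᴴ.mulVec (v θ))) +
          ∑ j, ((γ j).eval (θ / H)) • g j) θ) :
    v H - (V * Wᴴ).mulVec (v H) =
      (v 0 + H • ∑ j, (∫ τ in (0:ℝ)..1, (γ j).eval τ) • g j) -
        (V * Wᴴ).mulVec (v 0 + H • ∑ j, (∫ τ in (0:ℝ)..1, (γ j).eval τ) • g j) := by
  classical
  -- the continuous linear projection onto the surrogate subspace
  set L : (Fin N → ℂ) →L[ℂ] (Fin N → ℂ) :=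
    LinearMap.toContinuousLinearMap ((V * Wᴴ).mulVecLin) with hL
  have hLapp : ∀ x, L x = (V * Wᴴ).mulVec x := fun x => rfl
  -- L kills nothing but fixes range of V.mulVec
  have hfix : ∀ x : Fin S → ℂ, L (V.mulVec x) = V.mulVec x := by
    intro x
    rw [hLapp, Matrix.mulVec_mulVec, Matrix.mul_assoc, hVW, Matrix.mul_one]
  -- u := (I - L) ∘ v
  set u : ℝ → (Fin N → ℂ) := fun θ => v θ - L (v θ) with hu
  set p : Fin i → (Fin N → ℂ) := fun j => g j - L (g j) with hp
  set d : ℝ → (Fin N → ℂ) := fun θ => ∑ j, ((γ j).eval (θ / H)) • p j with hd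
  have hud : ∀ θ ∈ Set.uIcc (0:ℝ) H, HasDerivAt u (d θ) θ := by
    intro θ hθ
    rw [Set.uIcc_of_le hH.le] at hθ
    have h1 := hv θ hθ
    have h2 : HasDerivAt (fun t => L (v t))
        (L (δ • V.mulVec (fs (T + δ * θ) (Wᴴ.mulVec (v θ))) +
          ∑ j, ((γ j).eval (θ / H)) • g j)) θ :=
      ((L.restrictScalars ℝ).hasFDerivAt (x := v θ)).comp_hasDerivAt θ h1
    have := h1.sub h2
    convert this using 1
    · rfl
    · rfl
    · rfl
    · rfl
    rw [hd]
    simp only [map_add, map_sum, L.map_smul_of_tower, hfix, hp]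
    rw [add_sub_add_left_eq_sub, ← Finset.sum_sub_distrib]
    simp [smul_sub]
  have hcont : ∀ j : Fin i, Continuous fun θ : ℝ => ((γ j).eval (θ / H)) • p j := by
    intro j
    exact (((γ j).continuous_aeval.comp (continuous_id.div_const H))).smul continuous_const
  have hdint : IntervalIntegrable d MeasureTheory.volume 0 H := by
    exact (continuous_finset_sum _ fun j _ => hcont j).intervalIntegrable 0 H
  have key : u H - u 0 = ∫ θ in (0:ℝ)..H, d θ :=
    (intervalIntegral.integral_eq_sub_of_hasDerivAt hud hdint).symm
  have hint : (∫ θ in (0:ℝ)..H, d θ) = H • ∑ j, (∫ τ in (0:ℝ)..1, (γ j).eval τ) • p j := by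
    rw [hd]
    rw [intervalIntegral.integral_finset_sum
      (fun j _ => (hcont j).intervalIntegrable 0 H)]
    rw [Finset.smul_sum]
    congr 1
    ext j
    rw [intervalIntegral.integral_smul_const]
    rw [intervalIntegral.integral_comp_div (c := H) (fun τ => (γ j).eval τ) hH.ne']
    rw [zero_div, div_self hH.ne', smul_assoc]
  have hfin : u H = u 0 + H • ∑ j, (∫ τ in (0:ℝ)..1, (γ j).eval τ) • p j := by
    rw [← hint, ← key]; abel
  have : v H - L (v H) =
      (v 0 + H • ∑ j, (∫ τ in (0:ℝ)..1, (γ j).eval τ) • g j) -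
        L (v 0 + H • ∑ j, (∫ τ in (0:ℝ)..1, (γ j).eval τ) • g j) := by
    have expand : L (v 0 + H • ∑ j, (∫ τ in (0:ℝ)..1, (γ j).eval τ) • g j)
        = L (v 0) + H • ∑ j, (∫ τ in (0:ℝ)..1, (γ j).eval τ) • L (g j) := by
      simp only [map_add, ContinuousLinearMap.map_smul_of_tower, map_sum]
    rw [expand]
    calc v H - L (v H) = u H := rfl
      _ = u 0 + H • ∑ j, (∫ τ in (0:ℝ)..1, (γ j).eval τ) • p j := hfin
      _ = _ := by
        rw [hu, hp]
        simp only [smul_sub, Finset.sum_sub_distrib, smul_sub]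
        abel
  exact this
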